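/- Let X, V, Y, U, Z be finite random variables with the Markov chain U → V → X → (Y,Z). Then H(X|Z,U) − I(X;V|Y,U) − H(X|Z,V) = I(Y;V|U) − I(Z;V|U). -/

import Mathlib

open scoped BigOperators Classical

variable {Ω : Type} [Fintype Ω]

/-- Probability that the random variable `X` takes the value `x` under the pmf `p`. -/
noncomputable def prEq {α : Type} (p : Ω → ℝ) (X : Ω → α) (x : α) : ℝ :=
  ∑ ω, if X ω = x then p ω else 0

/-- Shannon entropy of a finite random variable. -/
noncomputable def ent {α : Type} [Fintype α] (p : Ω → ℝ) (X : Ω → α) : ℝ :=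
  ∑ x, Real.negMulLog (prEq p X x)

/-- Conditional Shannon entropy `H(X | Y)`. -/
noncomputable def condEnt {α β : Type} [Fintype α] [Fintype β]
    (p : Ω → ℝ) (X : Ω → α) (Y : Ω → β) : ℝ :=
  ent p (fun ω => (X ω, Y ω)) - ent p Y

/-- Mutual information `I(X ; Y)`. -/
noncomputable def mutInf {α β : Type} [Fintype α] [Fintype β]
    (p : Ω → ℝ) (X : Ω → α) (Y : Ω → β) : ℝ :=
  ent p X + ent p Y - ent p (fun ω => (X ω, Y ω))

/-- Conditional mutual information `I(X ; Y | Z)`. -/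
noncomputable def condMutInf {α β γ : Type} [Fintype α] [Fintype β] [Fintype γ]
    (p : Ω → ℝ) (X : Ω → α) (Y : Ω → β) (Z : Ω → γ) : ℝ :=
  condEnt p X Z - condEnt p X (fun ω => (Y ω, Z ω))

/-- `X` and `Y` are conditionally independent given `Z`. -/
def CondIndep {α β γ : Type} (p : Ω → ℝ) (X : Ω → α) (Y : Ω → β) (Z : Ω → γ) : Prop :=
  ∀ x y z,
    prEq p (fun ω => (X ω, Y ω, Z ω)) (x, y, z) * prEq p Z z =
      prEq p (fun ω => (X ω, Z ω)) (x, z) * prEq p (fun ω => (Y ω, Z ω)) (y, z)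

/-- `X` and `Y` are independent. -/
def Indep {α β : Type} (p : Ω → ℝ) (X : Ω → α) (Y : Ω → β) : Prop :=
  ∀ x y, prEq p (fun ω => (X ω, Y ω)) (x, y) = prEq p X x * prEq p Y y

/-- `p` is a probability mass function on `Ω`. -/
def IsPMF (p : Ω → ℝ) : Prop := (∀ ω, 0 ≤ p ω) ∧ ∑ ω, p ω = 1

lemma prEq_nonneg {α} (p : Ω → ℝ) (hp : ∀ ω, 0 ≤ p ω) (X : Ω → α) (x : α) :
    0 ≤ prEq p X x := by
  refine Finset.sum_nonneg fun ω _ => ?_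
  split_ifs
  exacts [hp ω, le_refl 0]

lemma prEq_inj {α β} (p : Ω → ℝ) (W : Ω → α) {g : α → β} (hg : Function.Injective g) (a : α) :
    prEq p (fun ω => g (W ω)) (g a) = prEq p W a := by
  unfold prEq
  exact Finset.sum_congr rfl fun ω _ => by simp [hg.eq_iff]

lemma prEq_sum_snd {α β} [Fintype β] (p : Ω → ℝ) (W : Ω → α) (S : Ω → β) (a : α) :
    ∑ b, prEq p (fun ω => (W ω, S ω)) (a, b) = prEq p W a := by
  unfold prEq
  rw [Finset.sum_comm]
  refine Finset.sum_congr rfl fun ω _ => ?_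
  by_cases h : W ω = a <;> simp [Prod.ext_iff, h]

lemma prEq_sum_inj {α β δ} [Fintype β] (p : Ω → ℝ) (W : Ω → α) (S : Ω → β)
    {g : α × β → δ} (hg : Function.Injective g) (a : α) :
    ∑ b, prEq p (fun ω => g (W ω, S ω)) (g (a, b)) = prEq p W a := by
  unfold prEq
  rw [Finset.sum_comm]
  refine Finset.sum_congr rfl fun ω _ => ?_
  simp only [hg.eq_iff, Prod.mk.injEq]
  by_cases h : W ω = a <;> simp [h]

lemma prEq_eq_zero {α β} (p : Ω → ℝ) (W : Ω → α) {g : α → β} {b : β}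
    (h : ∀ a, g a ≠ b) : prEq p (fun ω => g (W ω)) b = 0 := by
  unfold prEq
  exact Finset.sum_eq_zero fun ω _ => by simp [h (W ω)]

lemma ent_inj {α β} [Fintype α] [Fintype β] (p : Ω → ℝ) (W : Ω → α) {g : α → β}
    (hg : Function.Injective g) :
    ent p (fun ω => g (W ω)) = ent p W := by
  unfold ent
  have hz : ∀ b ∈ Finset.univ, b ∉ Finset.univ.image g →
      Real.negMulLog (prEq p (fun ω => g (W ω)) b) = 0 := by
    intro b _ hb
    have : ∀ a, g a ≠ b := fun a ha => hb (Finset.mem_image.mpr ⟨a, Finset.mem_univ a, ha⟩)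
    rw [prEq_eq_zero p W this, Real.negMulLog_zero]
  rw [← Finset.sum_subset (Finset.subset_univ (Finset.univ.image g)) hz,
    Finset.sum_image (fun a _ a' _ h => hg h)]
  exact Finset.sum_congr rfl fun a _ => by rw [prEq_inj p W hg a]

section drops
variable {α α₁ α₂ β β₁ β₂ γ : Type} {p : Ω → ℝ}

lemma CondIndep.margB₁ [Fintype β₂] {A : Ω → α} {B₁ : Ω → β₁} {B₂ : Ω → β₂} {C : Ω → γ}
    (h : CondIndep p A (fun ω => (B₁ ω, B₂ ω)) C) : CondIndep p A B₁ C := by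
  intro a b c
  have g1 : Function.Injective
      (fun x : (α × β₁ × γ) × β₂ => (x.1.1, (x.1.2.1, x.2), x.1.2.2)) :=
    Function.LeftInverse.injective
      (g := fun y : α × (β₁ × β₂) × γ => ((y.1, y.2.1.1, y.2.2), y.2.1.2)) fun x => rfl
  have g2 : Function.Injective
      (fun x : (β₁ × γ) × β₂ => ((x.1.1, x.2), x.1.2)) :=
    Function.LeftInverse.injective
      (g := fun y : (β₁ × β₂) × γ => ((y.1.1, y.2), y.1.2)) fun x => rfl
  have M1 := prEq_sum_inj p (fun ω => (A ω, B₁ ω, C ω)) B₂ g1 (a, b, c)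
  have M2 := prEq_sum_inj p (fun ω => (B₁ ω, C ω)) B₂ g2 (b, c)
  calc prEq p (fun ω => (A ω, B₁ ω, C ω)) (a, b, c) * prEq p C c
      = ∑ b₂, prEq p (fun ω => (A ω, (B₁ ω, B₂ ω), C ω)) (a, (b, b₂), c) * prEq p C c := by
        rw [← Finset.sum_mul]; exact congrArg (· * prEq p C c) M1.symm
    _ = ∑ b₂, prEq p (fun ω => (A ω, C ω)) (a, c) *
          prEq p (fun ω => ((B₁ ω, B₂ ω), C ω)) ((b, b₂), c) := by
        exact Finset.sum_congr rfl fun b₂ _ => h a (b, b₂) c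
    _ = prEq p (fun ω => (A ω, C ω)) (a, c) * prEq p (fun ω => (B₁ ω, C ω)) (b, c) := by
        rw [← Finset.mul_sum]; exact congrArg _ M2

lemma CondIndep.margB₂ [Fintype β₁] {A : Ω → α} {B₁ : Ω → β₁} {B₂ : Ω → β₂} {C : Ω → γ}
    (h : CondIndep p A (fun ω => (B₁ ω, B₂ ω)) C) : CondIndep p A B₂ C := by
  intro a b c
  have g1 : Function.Injective
      (fun x : (α × β₂ × γ) × β₁ => (x.1.1, (x.2, x.1.2.1), x.1.2.2)) :=
    Function.LeftInverse.injective
      (g := fun y : α × (β₁ × β₂) × γ => ((y.1, y.2.1.2, y.2.2), y.2.1.1)) fun x => rfl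
  have g2 : Function.Injective
      (fun x : (β₂ × γ) × β₁ => ((x.2, x.1.1), x.1.2)) :=
    Function.LeftInverse.injective
      (g := fun y : (β₁ × β₂) × γ => ((y.1.2, y.2), y.1.1)) fun x => rfl
  have M1 := prEq_sum_inj p (fun ω => (A ω, B₂ ω, C ω)) B₁ g1 (a, b, c)
  have M2 := prEq_sum_inj p (fun ω => (B₂ ω, C ω)) B₁ g2 (b, c)
  calc prEq p (fun ω => (A ω, B₂ ω, C ω)) (a, b, c) * prEq p C c
      = ∑ b₁, prEq p (fun ω => (A ω, (B₁ ω, B₂ ω), C ω)) (a, (b₁, b), c) * prEq p C c := by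
        rw [← Finset.sum_mul]; exact congrArg (· * prEq p C c) M1.symm
    _ = ∑ b₁, prEq p (fun ω => (A ω, C ω)) (a, c) *
          prEq p (fun ω => ((B₁ ω, B₂ ω), C ω)) ((b₁, b), c) := by
        exact Finset.sum_congr rfl fun b₁ _ => h a (b₁, b) c
    _ = prEq p (fun ω => (A ω, C ω)) (a, c) * prEq p (fun ω => (B₂ ω, C ω)) (b, c) := by
        rw [← Finset.mul_sum]; exact congrArg _ M2

lemma CondIndep.margA₁ [Fintype α₂] {A₁ : Ω → α₁} {A₂ : Ω → α₂} {B : Ω → β} {C : Ω → γ}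
    (h : CondIndep p (fun ω => (A₁ ω, A₂ ω)) B C) : CondIndep p A₁ B C := by
  intro a b c
  have g1 : Function.Injective
      (fun x : (α₁ × β × γ) × α₂ => ((x.1.1, x.2), x.1.2.1, x.1.2.2)) :=
    Function.LeftInverse.injective
      (g := fun y : (α₁ × α₂) × β × γ => ((y.1.1, y.2.1, y.2.2), y.1.2)) fun x => rfl
  have g2 : Function.Injective
      (fun x : (α₁ × γ) × α₂ => ((x.1.1, x.2), x.1.2)) :=
    Function.LeftInverse.injective
      (g := fun y : (α₁ × α₂) × γ => ((y.1.1, y.2), y.1.2)) fun x => rfl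
  have M1 := prEq_sum_inj p (fun ω => (A₁ ω, B ω, C ω)) A₂ g1 (a, b, c)
  have M2 := prEq_sum_inj p (fun ω => (A₁ ω, C ω)) A₂ g2 (a, c)
  calc prEq p (fun ω => (A₁ ω, B ω, C ω)) (a, b, c) * prEq p C c
      = ∑ a₂, prEq p (fun ω => ((A₁ ω, A₂ ω), B ω, C ω)) ((a, a₂), b, c) * prEq p C c := by
        rw [← Finset.sum_mul]; exact congrArg (· * prEq p C c) M1.symm
    _ = ∑ a₂, prEq p (fun ω => ((A₁ ω, A₂ ω), C ω)) ((a, a₂), c) *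
          prEq p (fun ω => (B ω, C ω)) (b, c) := by
        exact Finset.sum_congr rfl fun a₂ _ => h (a, a₂) b c
    _ = prEq p (fun ω => (A₁ ω, C ω)) (a, c) * prEq p (fun ω => (B ω, C ω)) (b, c) := by
        rw [← Finset.sum_mul]; exact congrArg (· * prEq p (fun ω => (B ω, C ω)) (b, c)) M2

lemma CondIndep.margA₂ [Fintype α₁] {A₁ : Ω → α₁} {A₂ : Ω → α₂} {B : Ω → β} {C : Ω → γ}
    (h : CondIndep p (fun ω => (A₁ ω, A₂ ω)) B C) : CondIndep p A₂ B C := by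
  intro a b c
  have g1 : Function.Injective
      (fun x : (α₂ × β × γ) × α₁ => ((x.2, x.1.1), x.1.2.1, x.1.2.2)) :=
    Function.LeftInverse.injective
      (g := fun y : (α₁ × α₂) × β × γ => ((y.1.2, y.2.1, y.2.2), y.1.1)) fun x => rfl
  have g2 : Function.Injective
      (fun x : (α₂ × γ) × α₁ => ((x.2, x.1.1), x.1.2)) :=
    Function.LeftInverse.injective
      (g := fun y : (α₁ × α₂) × γ => ((y.1.2, y.2), y.1.1)) fun x => rfl
  have M1 := prEq_sum_inj p (fun ω => (A₂ ω, B ω, C ω)) A₁ g1 (a, b, c)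
  have M2 := prEq_sum_inj p (fun ω => (A₂ ω, C ω)) A₁ g2 (a, c)
  calc prEq p (fun ω => (A₂ ω, B ω, C ω)) (a, b, c) * prEq p C c
      = ∑ a₁, prEq p (fun ω => ((A₁ ω, A₂ ω), B ω, C ω)) ((a₁, a), b, c) * prEq p C c := by
        rw [← Finset.sum_mul]; exact congrArg (· * prEq p C c) M1.symm
    _ = ∑ a₁, prEq p (fun ω => ((A₁ ω, A₂ ω), C ω)) ((a₁, a), c) *
          prEq p (fun ω => (B ω, C ω)) (b, c) := by
        exact Finset.sum_congr rfl fun a₁ _ => h (a₁, a) b c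
    _ = prEq p (fun ω => (A₂ ω, C ω)) (a, c) * prEq p (fun ω => (B ω, C ω)) (b, c) := by
        rw [← Finset.sum_mul]; exact congrArg (· * prEq p (fun ω => (B ω, C ω)) (b, c)) M2

end drops

lemma negMulLog_sum {ι : Type} [Fintype ι] (w : ι → ℝ) (T : ℝ) (hT : T = ∑ i, w i) :
    Real.negMulLog T = ∑ i, -(w i * Real.log T) := by
  conv_lhs => rw [hT]
  simp only [Real.negMulLog, neg_mul]
  rw [Finset.sum_mul, ← hT]
  exact (Finset.sum_neg_distrib _).symm

lemma sum3_comm {α β γ} [Fintype α] [Fintype β] [Fintype γ] (F : α → β → γ → ℝ) :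
    ∑ a, ∑ b, ∑ c, F a b c = ∑ c, ∑ a, ∑ b, F a b c := by
  calc ∑ a, ∑ b, ∑ c, F a b c = ∑ a, ∑ c, ∑ b, F a b c :=
        Finset.sum_congr rfl fun a _ => Finset.sum_comm
    _ = ∑ c, ∑ a, ∑ b, F a b c := Finset.sum_comm

lemma ent_condIndep {α β γ} [Fintype α] [Fintype β] [Fintype γ]
    (p : Ω → ℝ) (hp0 : ∀ ω, 0 ≤ p ω)
    (A : Ω → α) (B : Ω → β) (C : Ω → γ) (h : CondIndep p A B C) :
    ent p (fun ω => (A ω, B ω, C ω)) + ent p C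
      = ent p (fun ω => (A ω, C ω)) + ent p (fun ω => (B ω, C ω)) := by
  set f : α → β → γ → ℝ := fun a b c => prEq p (fun ω => (A ω, B ω, C ω)) (a, b, c) with hf
  set g : α → γ → ℝ := fun a c => prEq p (fun ω => (A ω, C ω)) (a, c) with hgd
  set h' : β → γ → ℝ := fun b c => prEq p (fun ω => (B ω, C ω)) (b, c) with hhd
  set k : γ → ℝ := fun c => prEq p C c with hkd
  -- marginal identities
  have gg1 : Function.Injective (fun x : (α × γ) × β => (x.1.1, x.2, x.1.2)) :=
    Function.LeftInverse.injective
      (g := fun y : α × β × γ => ((y.1, y.2.2), y.2.1)) fun x => rfl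
  have gg2 : Function.Injective (fun x : (β × γ) × α => (x.2, x.1.1, x.1.2)) :=
    Function.LeftInverse.injective
      (g := fun y : α × β × γ => ((y.2.1, y.2.2), y.1)) fun x => rfl
  have gg3 : Function.Injective (fun x : γ × α => (x.2, x.1)) :=
    Function.LeftInverse.injective (g := fun y : α × γ => (y.2, y.1)) fun x => rfl
  have hg : ∀ a c, g a c = ∑ b, f a b c := fun a c =>
    (prEq_sum_inj p (fun ω => (A ω, C ω)) B gg1 (a, c)).symm
  have hh : ∀ b c, h' b c = ∑ a, f a b c := fun b c =>
    (prEq_sum_inj p (fun ω => (B ω, C ω)) A gg2 (b, c)).symm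
  have hk : ∀ c, k c = ∑ a, ∑ b, f a b c := by
    intro c
    have h3 : k c = ∑ a, g a c := (prEq_sum_inj p C A gg3 c).symm
    rw [h3]
    exact Finset.sum_congr rfl fun a _ => hg a c
  -- nonnegativity and domination
  have hf0 : ∀ a b c, 0 ≤ f a b c := fun a b c => prEq_nonneg p hp0 _ _
  have hfg : ∀ a b c, f a b c ≤ g a c := by
    intro a b c; rw [hg a c]
    exact Finset.single_le_sum (fun b' _ => hf0 a b' c) (Finset.mem_univ b)
  have hfh : ∀ a b c, f a b c ≤ h' b c := by
    intro a b c; rw [hh b c]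
    exact Finset.single_le_sum (fun a' _ => hf0 a' b c) (Finset.mem_univ a)
  have hfk : ∀ a b c, f a b c ≤ k c := by
    intro a b c; rw [hk c]
    calc f a b c ≤ ∑ b', f a b' c :=
          Finset.single_le_sum (fun b' _ => hf0 a b' c) (Finset.mem_univ b)
      _ ≤ ∑ a', ∑ b', f a' b' c :=
          Finset.single_le_sum (fun a' _ => Finset.sum_nonneg fun b' _ => hf0 a' b' c)
            (Finset.mem_univ a)
  -- termwise identity
  have term : ∀ a b c, Real.negMulLog (f a b c) - f a b c * Real.log (k c)
      + f a b c * Real.log (g a c) + f a b c * Real.log (h' b c) = 0 := by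
    intro a b c
    by_cases hfz : f a b c = 0
    · simp [hfz]
    · have hfp : 0 < f a b c := lt_of_le_of_ne (hf0 a b c) (Ne.symm hfz)
      have hgp : 0 < g a c := lt_of_lt_of_le hfp (hfg a b c)
      have hhp : 0 < h' b c := lt_of_lt_of_le hfp (hfh a b c)
      have hkp : 0 < k c := lt_of_lt_of_le hfp (hfk a b c)
      have hci : f a b c * k c = g a c * h' b c := h a b c
      have hlog : Real.log (f a b c) + Real.log (k c)
          = Real.log (g a c) + Real.log (h' b c) := by
        rw [← Real.log_mul hfp.ne' hkp.ne', ← Real.log_mul hgp.ne' hhp.ne', hci]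
      have expand : Real.negMulLog (f a b c) = -(f a b c) * Real.log (f a b c) := by
        simp [Real.negMulLog]
      rw [expand]
      nlinarith [hlog, hfp]
  -- entropy expansions
  have eABC : ent p (fun ω => (A ω, B ω, C ω)) = ∑ c, ∑ a, ∑ b, Real.negMulLog (f a b c) := by
    unfold ent
    rw [Fintype.sum_prod_type]
    simp_rw [Fintype.sum_prod_type]
    exact sum3_comm _
  have eAC : ent p (fun ω => (A ω, C ω)) = ∑ c, ∑ a, Real.negMulLog (g a c) := by
    unfold ent
    rw [Fintype.sum_prod_type]
    exact Finset.sum_comm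
  have eBC : ent p (fun ω => (B ω, C ω)) = ∑ c, ∑ b, Real.negMulLog (h' b c) := by
    unfold ent
    rw [Fintype.sum_prod_type]
    exact Finset.sum_comm
  have eC : ent p C = ∑ c, Real.negMulLog (k c) := rfl
  have key : ∀ c, (∑ a, ∑ b, Real.negMulLog (f a b c)) + Real.negMulLog (k c)
      = (∑ a, Real.negMulLog (g a c)) + (∑ b, Real.negMulLog (h' b c)) := by
    intro c
    have ek : Real.negMulLog (k c) = ∑ a, ∑ b, -(f a b c * Real.log (k c)) := by
      have e0 := negMulLog_sum (fun x : α × β => f x.1 x.2 c) (k c)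
        (by rw [hk c, Fintype.sum_prod_type])
      rw [e0, Fintype.sum_prod_type]
    calc (∑ a, ∑ b, Real.negMulLog (f a b c)) + Real.negMulLog (k c)
        = ∑ a, ∑ b, (Real.negMulLog (f a b c) + -(f a b c * Real.log (k c))) := by
          rw [ek, ← Finset.sum_add_distrib]
          exact Finset.sum_congr rfl fun a _ => (Finset.sum_add_distrib).symm
      _ = ∑ a, ∑ b, (-(f a b c * Real.log (g a c)) + -(f a b c * Real.log (h' b c))) := by
          refine Finset.sum_congr rfl fun a _ => Finset.sum_congr rfl fun b _ => ?_
          have := term a b c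
          linarith
      _ = (∑ a, ∑ b, -(f a b c * Real.log (g a c)))
            + ∑ a, ∑ b, -(f a b c * Real.log (h' b c)) := by
          rw [← Finset.sum_add_distrib]
          exact Finset.sum_congr rfl fun a _ => Finset.sum_add_distrib
      _ = (∑ a, Real.negMulLog (g a c)) + (∑ b, Real.negMulLog (h' b c)) := by
          congr 1
          · exact Finset.sum_congr rfl fun a _ => (negMulLog_sum _ _ (hg a c)).symm
          · rw [Finset.sum_comm]
            exact Finset.sum_congr rfl fun b _ => (negMulLog_sum _ _ (hh b c)).symm
  rw [eABC, eAC, eBC, eC, ← Finset.sum_add_distrib, ← Finset.sum_add_distrib]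
  exact Finset.sum_congr rfl fun c _ => key c

set_option maxHeartbeats 2000000 in

set_option maxHeartbeats 2000000 in
theorem stmt16 {𝓤 𝓥 𝓧 𝓨 𝓩 : Type} [Fintype 𝓤] [Fintype 𝓥] [Fintype 𝓧] [Fintype 𝓨] [Fintype 𝓩]
    (p : Ω → ℝ) (hp : IsPMF p)
    (U : Ω → 𝓤) (V : Ω → 𝓥) (X : Ω → 𝓧) (Y : Ω → 𝓨) (Z : Ω → 𝓩)
    (hmc1 : CondIndep p U (fun ω => (X ω, Y ω, Z ω)) V)
    (hmc2 : CondIndep p (fun ω => (U ω, V ω)) (fun ω => (Y ω, Z ω)) X) :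
    condEnt p X (fun ω => (Z ω, U ω)) - condMutInf p X V (fun ω => (Y ω, U ω)) -
        condEnt p X (fun ω => (Z ω, V ω)) =
      condMutInf p Y V U - condMutInf p Z V U := by
  -- derived conditional independencies
  have c1 : CondIndep p U Z X := (hmc2.margB₂).margA₁
  have c2 : CondIndep p U Y X := (hmc2.margB₁).margA₁
  have c3 : CondIndep p (fun ω => (U ω, V ω)) Y X := hmc2.margB₁
  have c5 : CondIndep p V Z X := (hmc2.margB₂).margA₂
  have c7 : CondIndep p U X V := hmc1.margB₁
  have cYZ : CondIndep p U (fun ω => (Y ω, Z ω)) V := hmc1.margB₂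
  have c4 : CondIndep p U Y V := cYZ.margB₁
  have c6 : CondIndep p U Z V := cYZ.margB₂
  -- entropy identities from conditional independence
  have I1 : ent p (fun ω => (U ω, Z ω, X ω)) + ent p X
      = ent p (fun ω => (U ω, X ω)) + ent p (fun ω => (Z ω, X ω)) :=
    ent_condIndep p hp.1 U Z X c1
  have I2 : ent p (fun ω => (U ω, Y ω, X ω)) + ent p X
      = ent p (fun ω => (U ω, X ω)) + ent p (fun ω => (Y ω, X ω)) :=
    ent_condIndep p hp.1 U Y X c2
  have I3 : ent p (fun ω => ((U ω, V ω), Y ω, X ω)) + ent p X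
      = ent p (fun ω => ((U ω, V ω), X ω)) + ent p (fun ω => (Y ω, X ω)) :=
    ent_condIndep p hp.1 (fun ω => (U ω, V ω)) Y X c3
  have I4 : ent p (fun ω => (U ω, Y ω, V ω)) + ent p V
      = ent p (fun ω => (U ω, V ω)) + ent p (fun ω => (Y ω, V ω)) :=
    ent_condIndep p hp.1 U Y V c4
  have I5 : ent p (fun ω => (V ω, Z ω, X ω)) + ent p X
      = ent p (fun ω => (V ω, X ω)) + ent p (fun ω => (Z ω, X ω)) :=
    ent_condIndep p hp.1 V Z X c5
  have I6 : ent p (fun ω => (U ω, Z ω, V ω)) + ent p V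
      = ent p (fun ω => (U ω, V ω)) + ent p (fun ω => (Z ω, V ω)) :=
    ent_condIndep p hp.1 U Z V c6
  have I7 : ent p (fun ω => (U ω, X ω, V ω)) + ent p V
      = ent p (fun ω => (U ω, V ω)) + ent p (fun ω => (X ω, V ω)) :=
    ent_condIndep p hp.1 U X V c7
  -- regrouping equalities
  have hE1 : Function.Injective (fun t : 𝓤 × 𝓩 × 𝓧 => (t.2.2, t.2.1, t.1)) :=
    Function.LeftInverse.injective (g := fun t : 𝓧 × 𝓩 × 𝓤 => (t.2.2, t.2.1, t.1)) fun x => rfl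
  have E1 : ent p (fun ω => (X ω, Z ω, U ω)) = ent p (fun ω => (U ω, Z ω, X ω)) :=
    ent_inj p (fun ω => (U ω, Z ω, X ω)) hE1
  have hE2 : Function.Injective (fun t : 𝓤 × 𝓨 × 𝓧 => (t.2.2, t.2.1, t.1)) :=
    Function.LeftInverse.injective (g := fun t : 𝓧 × 𝓨 × 𝓤 => (t.2.2, t.2.1, t.1)) fun x => rfl
  have E2 : ent p (fun ω => (X ω, Y ω, U ω)) = ent p (fun ω => (U ω, Y ω, X ω)) :=
    ent_inj p (fun ω => (U ω, Y ω, X ω)) hE2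
  have hE3 : Function.Injective (fun t : (𝓤 × 𝓥) × 𝓨 × 𝓧 => (t.2.2, t.1.2, t.2.1, t.1.1)) :=
    Function.LeftInverse.injective (g := fun s : 𝓧 × 𝓥 × 𝓨 × 𝓤 => ((s.2.2.2, s.2.1), (s.2.2.1, s.1))) fun x => rfl
  have E3 : ent p (fun ω => (X ω, V ω, Y ω, U ω)) = ent p (fun ω => ((U ω, V ω), Y ω, X ω)) :=
    ent_inj p (fun ω => ((U ω, V ω), Y ω, X ω)) hE3
  have hE4 : Function.Injective (fun t : 𝓤 × 𝓨 × 𝓥 => (t.2.2, t.2.1, t.1)) :=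
    Function.LeftInverse.injective (g := fun t : 𝓥 × 𝓨 × 𝓤 => (t.2.2, t.2.1, t.1)) fun x => rfl
  have E4 : ent p (fun ω => (V ω, Y ω, U ω)) = ent p (fun ω => (U ω, Y ω, V ω)) :=
    ent_inj p (fun ω => (U ω, Y ω, V ω)) hE4
  have hE4b : Function.Injective (fun t : 𝓤 × 𝓨 × 𝓥 => (t.2.1, t.2.2, t.1)) :=
    Function.LeftInverse.injective (g := fun s : 𝓨 × 𝓥 × 𝓤 => (s.2.2, s.1, s.2.1)) fun x => rfl
  have E4b : ent p (fun ω => (Y ω, V ω, U ω)) = ent p (fun ω => (U ω, Y ω, V ω)) :=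
    ent_inj p (fun ω => (U ω, Y ω, V ω)) hE4b
  have hE5 : Function.Injective (fun t : 𝓥 × 𝓩 × 𝓧 => (t.2.2, t.2.1, t.1)) :=
    Function.LeftInverse.injective (g := fun t : 𝓧 × 𝓩 × 𝓥 => (t.2.2, t.2.1, t.1)) fun x => rfl
  have E5 : ent p (fun ω => (X ω, Z ω, V ω)) = ent p (fun ω => (V ω, Z ω, X ω)) :=
    ent_inj p (fun ω => (V ω, Z ω, X ω)) hE5
  have hE6 : Function.Injective (fun t : 𝓤 × 𝓩 × 𝓥 => (t.2.1, t.2.2, t.1)) :=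
    Function.LeftInverse.injective (g := fun s : 𝓩 × 𝓥 × 𝓤 => (s.2.2, s.1, s.2.1)) fun x => rfl
  have E6 : ent p (fun ω => (Z ω, V ω, U ω)) = ent p (fun ω => (U ω, Z ω, V ω)) :=
    ent_inj p (fun ω => (U ω, Z ω, V ω)) hE6
  have hE7 : Function.Injective (fun t : 𝓤 × 𝓧 × 𝓥 => ((t.1, t.2.2), t.2.1)) :=
    Function.LeftInverse.injective (g := fun s : (𝓤 × 𝓥) × 𝓧 => (s.1.1, s.2, s.1.2)) fun x => rfl
  have E7 : ent p (fun ω => ((U ω, V ω), X ω)) = ent p (fun ω => (U ω, X ω, V ω)) :=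
    ent_inj p (fun ω => (U ω, X ω, V ω)) hE7
  have hE8 : Function.Injective (fun t : 𝓧 × 𝓥 => (t.2, t.1)) :=
    Function.LeftInverse.injective (g := fun s : 𝓥 × 𝓧 => (s.2, s.1)) fun x => rfl
  have E8 : ent p (fun ω => (V ω, X ω)) = ent p (fun ω => (X ω, V ω)) :=
    ent_inj p (fun ω => (X ω, V ω)) hE8
  simp only [condMutInf, condEnt]
  linarith [I1, I2, I3, I4, I5, I6, I7, E1, E2, E3, E4, E4b, E5, E6, E7, E8]
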